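/- Let n ≥ 1, s ∈ (0,1), a := 1−2s, p ∈ [1,∞), R > 0, and let u ∈ L^p(B_{2R}) ∩ L¹_s(ℝⁿ). Let v be the s-harmonic extension of u. Then (∫_{𝔅_R⁺} y^a |v(x)|^p dx)^{1/p} ≤ C_R ( ‖u‖_{L^p(B_{2R})} + ‖u‖_{L¹_s(ℝⁿ)} ) for some constant C_R depending only on n, s, p, and R. -/

import Mathlib

open MeasureTheory Real Filter Metric Set Topology
open scoped NNReal RealInnerProductSpace

noncomputable section

abbrev Eu (n : ℕ) : Type := EuclideanSpace ℝ (Fin n)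

/-- The first `n` coordinates of a point of `ℝ^{n+1}`. -/
def headE {n : ℕ} (x : Eu (n+1)) : Eu n := WithLp.toLp 2 (fun i : Fin n => x i.castSucc)

/-- The last coordinate of a point of `ℝ^{n+1}` (the "vertical" variable `y`). -/
def lastE {n : ℕ} (x : Eu (n+1)) : ℝ := x (Fin.last n)

/-- The point `(x', y) ∈ ℝ^{n+1}`. -/
def snocE {n : ℕ} (x' : Eu n) (y : ℝ) : Eu (n+1) :=
  WithLp.toLp 2 (Fin.snoc (α := fun _ => ℝ) (WithLp.ofLp x') y)

/-- The open upper half-space `ℝ^{n+1}_+`. -/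
def upperHS (n : ℕ) : Set (Eu (n+1)) := {x | 0 < lastE x}

/-- The open upper half-ball `𝔅_R⁺` of radius `R` centered at the origin. -/
def HB (n : ℕ) (R : ℝ) : Set (Eu (n+1)) := Metric.ball (0 : Eu (n+1)) R ∩ upperHS n

/-- The norm `‖u‖_{L¹_s(ℝⁿ)}`. -/
def L1sNorm (n : ℕ) (s : ℝ) (u : Eu n → ℝ) : ℝ :=
  ∫ x' : Eu n, |u x'| * (1 + ‖x'‖ ^ 2) ^ (-(((n : ℝ) + 2 * s) / 2))

/-- Membership in `L¹_s(ℝⁿ)`. -/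
def MemL1s (n : ℕ) (s : ℝ) (u : Eu n → ℝ) : Prop :=
  Integrable (fun x' : Eu n => u x' * (1 + ‖x'‖ ^ 2) ^ (-(((n : ℝ) + 2 * s) / 2)))

/-- The Poisson kernel `P_s(x̄', y) = p_{n,s} y^{2s} (|x̄'|² + y²)^{-(n+2s)/2}`. -/
def Pgen (n : ℕ) (s pns : ℝ) (xb : Eu n) (y : ℝ) : ℝ :=
  pns * y ^ (2 * s) * (‖xb‖ ^ 2 + y ^ 2) ^ (-(((n : ℝ) + 2 * s) / 2))

/-- `pns` is the normalizing constant of the Poisson kernel. -/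
def IsPoissonConst (n : ℕ) (s pns : ℝ) : Prop :=
  0 < pns ∧ ∀ y : ℝ, 0 < y → ∫ xb : Eu n, Pgen n s pns xb y = 1

/-- The `s`-harmonic extension of `u` to the upper half-space. -/
def sExt (n : ℕ) (s pns : ℝ) (u : Eu n → ℝ) (x : Eu (n+1)) : ℝ :=
  ∫ z' : Eu n, u z' * Pgen n s pns (headE x - z') (lastE x)

/-- Partial derivative in the `i`-th coordinate direction. -/
def pder {m : ℕ} (i : Fin m) (g : Eu m → ℝ) (x : Eu m) : ℝ :=
  fderiv ℝ g x (EuclideanSpace.single i 1)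

/-- Squared Frobenius norm of the Hessian. -/
def hessFrobSq {m : ℕ} (v : Eu m → ℝ) (x : Eu m) : ℝ :=
  ∑ i : Fin m, ∑ j : Fin m, (pder i (pder j v) x) ^ 2

/-- Radial derivative with respect to the origin, `v_r(x) = (x/|x|)·∇v(x)`. -/
def radialDer {m : ℕ} (v : Eu m → ℝ) (x : Eu m) : ℝ :=
  ⟪‖x‖⁻¹ • x, gradient v x⟫

/-- A Lipschitz test function on `ℝⁿ × [0,∞)` whose support is a compact subset
of `Ω × [0,∞)` (values on `{y < 0}` are irrelevant). -/
def AdmissibleTest (n : ℕ) (Ω : Set (Eu n)) (ξ : Eu (n+1) → ℝ) : Prop :=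
  (∃ K : ℝ≥0, LipschitzWith K ξ) ∧
    ∃ Kc : Set (Eu (n+1)), IsCompact Kc ∧ (Kc ⊆ {x | headE x ∈ Ω ∧ 0 ≤ lastE x}) ∧
      ∀ x : Eu (n+1), 0 ≤ lastE x → ξ x ≠ 0 → x ∈ Kc

/-- Stability of `u` in `Ω` for the half-Laplacian, written via the harmonic extension. -/
def IsStable (n : ℕ) (Ω : Set (Eu n)) (f : ℝ → ℝ) (u : Eu n → ℝ) : Prop :=
  ∀ ξ : Eu (n+1) → ℝ, AdmissibleTest n Ω ξ →
    ∫ x' in Ω, deriv f (u x') * (ξ (snocE x' 0)) ^ 2 ≤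
      ∫ x in upperHS n, ‖gradient ξ x‖ ^ 2

/-- Weighted stability of `u` in `Ω` (fractional power `s`, trace constant `d`). -/
def IsStableW (n : ℕ) (s d : ℝ) (Ω : Set (Eu n)) (f : ℝ → ℝ) (u : Eu n → ℝ) : Prop :=
  ∀ ξ : Eu (n+1) → ℝ, AdmissibleTest n Ω ξ →
    ∫ x' in Ω, deriv f (u x') * (ξ (snocE x' 0)) ^ 2 ≤
      d * ∫ x in upperHS n, (lastE x) ^ (1 - 2 * s) * ‖gradient ξ x‖ ^ 2

/-- `u` solves `(−Δ)^{1/2} u = f(u)` in `Ω` in the extension sense: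
`lim_{y↓0} −∂_y v(x',y) = f(u(x'))` for all `x' ∈ Ω`, where `v` is the harmonic extension. -/
def SolvesHalfLap (n : ℕ) (Ω : Set (Eu n)) (f : ℝ → ℝ) (u : Eu n → ℝ)
    (v : Eu (n+1) → ℝ) : Prop :=
  ∀ x' ∈ Ω, Tendsto (fun y : ℝ => -(deriv (fun t : ℝ => v (snocE x' t)) y))
    (𝓝[>] (0 : ℝ)) (𝓝 (f (u x')))

/-- `u` solves `(−Δ)^s u = f(u)` in `Ω` in the extension sense:
`−d lim_{y↓0} y^{1−2s} ∂_y v(x',y) = f(u(x'))` for all `x' ∈ Ω`. -/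
def SolvesGen (n : ℕ) (s d : ℝ) (Ω : Set (Eu n)) (f : ℝ → ℝ) (u : Eu n → ℝ)
    (v : Eu (n+1) → ℝ) : Prop :=
  ∀ x' ∈ Ω, Tendsto (fun y : ℝ => -(d * (y ^ (1 - 2 * s) * deriv (fun t : ℝ => v (snocE x' t)) y)))
    (𝓝[>] (0 : ℝ)) (𝓝 (f (u x')))

/-- `f` is of class `C^{1,γ}` (locally Hölder continuous first derivative). -/
def C1Holder (γ : ℝ) (f : ℝ → ℝ) : Prop :=
  ContDiff ℝ 1 f ∧ ∀ K : Set ℝ, IsCompact K →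
    ∃ C : ℝ≥0, HolderOnWith C γ.toNNReal (deriv f) K

/-- `Ω` has `C¹` boundary. -/
def HasC1Boundary {n : ℕ} (Ω : Set (Eu n)) : Prop :=
  ∀ x ∈ frontier Ω, ∃ g : Eu n → ℝ, ContDiffAt ℝ 1 g x ∧ fderiv ℝ g x ≠ 0 ∧
    ∀ᶠ z in 𝓝 x, (z ∈ Ω ↔ g z < 0)



open scoped ENNReal

namespace Stmt15aux

lemma rpow_add_le (a b : ℝ≥0∞) {p : ℝ} (hp : 0 ≤ p) :
    (a + b) ^ p ≤ 2 ^ p * (a ^ p + b ^ p) := by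
  have h1 : a + b ≤ 2 * max a b := by
    rcases le_total a b with h | h
    · rw [max_eq_right h, two_mul]; exact add_le_add_left h _
    · rw [max_eq_left h, two_mul]; exact add_le_add_right h _
  calc (a + b) ^ p ≤ (2 * max a b) ^ p := ENNReal.rpow_le_rpow h1 hp
    _ = 2 ^ p * (max a b) ^ p := ENNReal.mul_rpow_of_nonneg _ _ hp
    _ ≤ 2 ^ p * (a ^ p + b ^ p) := by
        refine mul_le_mul_right ?_ _
        rcases le_total a b with h | h
        · rw [max_eq_right h]; exact le_add_self
        · rw [max_eq_left h]; exact self_le_add_right _ _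

def eSplit (n : ℕ) : Eu (n+1) ≃ᵐ ℝ × Eu n :=
  (MeasurableEquiv.toLp 2 (Fin (n+1) → ℝ)).symm.trans
    ((MeasurableEquiv.piFinSuccAbove (fun _ : Fin (n+1) => ℝ) (Fin.last n)).trans
      ((MeasurableEquiv.refl ℝ).prodCongr (MeasurableEquiv.toLp 2 (Fin n → ℝ)).symm.symm))

lemma eSplit_apply (n : ℕ) (x : Eu (n+1)) : eSplit n x = (lastE x, headE x) := by
  refine Prod.ext (by rfl) ?_
  ext j
  show x ((Fin.last n).succAbove j) = x j.castSucc
  rw [Fin.succAbove_last]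

lemma eSplit_mp (n : ℕ) : MeasurePreserving (eSplit n) volume volume := by
  have h1 := EuclideanSpace.volume_preserving_symm_measurableEquiv_toLp (Fin (n+1))
  have h2 := volume_preserving_piFinSuccAbove (fun _ : Fin (n+1) => ℝ) (Fin.last n)
  have h3 : MeasurePreserving
      ((MeasurableEquiv.refl ℝ).prodCongr (MeasurableEquiv.toLp 2 (Fin n → ℝ)).symm.symm)
      volume volume := by
    have h4 := (MeasurePreserving.id (volume : Measure ℝ)).prod
      (MeasurePreserving.symm _ (EuclideanSpace.volume_preserving_symm_measurableEquiv_toLp (Fin n)))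
    rw [Measure.volume_eq_prod (α := ℝ) (β := Eu n)]
    rw [Measure.volume_eq_prod (α := ℝ) (β := Fin n → ℝ)]
    exact h4
  exact (h3.comp h2).comp h1

lemma norm_headE_le {n : ℕ} (x : Eu (n+1)) : ‖headE x‖ ≤ ‖x‖ := by
  rw [EuclideanSpace.norm_eq, EuclideanSpace.norm_eq]
  apply Real.sqrt_le_sqrt
  rw [Fin.sum_univ_castSucc]
  exact le_add_of_nonneg_right (by positivity)

lemma abs_lastE_le {n : ℕ} (x : Eu (n+1)) : |lastE x| ≤ ‖x‖ := by
  rw [EuclideanSpace.norm_eq, ← Real.sqrt_sq_eq_abs]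
  apply Real.sqrt_le_sqrt
  calc lastE x ^ 2 = ‖x (Fin.last n)‖ ^ 2 := by rw [Real.norm_eq_abs, sq_abs]; rfl
  _ ≤ ∑ i, ‖x i‖ ^ 2 := Finset.single_le_sum (f := fun i => ‖x i‖ ^ 2)
      (fun i _ => by positivity) (Finset.mem_univ (Fin.last n))

end Stmt15aux

set_option maxHeartbeats 2000000 in
/-- Weighted `L^p` bound for the `s`-harmonic extension
(Lemma `LpExtension`): `‖v‖_{L^p(𝔅_R⁺, y^a)} ≤ C_R (‖u‖_{L^p(B_{2R})} + ‖u‖_{L¹_s(ℝⁿ)})`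
with `C_R` depending only on `n`, `s`, `p` and `R`. -/
theorem stmt15 (n : ℕ) (hn : 1 ≤ n) (s : ℝ) (hs0 : 0 < s) (hs1 : s < 1)
    (p : ℝ) (hp : 1 ≤ p) (R : ℝ) (hR : 0 < R) :
    ∃ C : ℝ, 0 < C ∧
      ∀ (u : Eu n → ℝ) (pns : ℝ) (v : Eu (n+1) → ℝ),
        Measurable u →
        IntegrableOn (fun x' : Eu n => |u x'| ^ p) (Metric.ball (0 : Eu n) (2 * R)) →
        MemL1s n s u →
        IsPoissonConst n s pns → v = sExt n s pns u →
        (∫ x in HB n R, (lastE x) ^ (1 - 2 * s) * |v x| ^ p) ^ (1/p)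
          ≤ C * ((∫ x' in Metric.ball (0 : Eu n) (2 * R), |u x'| ^ p) ^ (1/p)
              + L1sNorm n s u) := by
  classical
  have hp0 : (0:ℝ) < p := lt_of_lt_of_le one_pos hp
  have hp0' : (0:ℝ) ≤ p := hp0.le
  have hpne : p ≠ 0 := hp0.ne'
  -- constants depending only on n, s, p, R
  set V1 : ℝ := (volume (ball (0:Eu n) 1)).toReal with hV1
  have hV1pos : 0 < V1 := by
    rw [hV1]
    exact ENNReal.toReal_pos (measure_ball_pos _ _ one_pos).ne' measure_ball_lt_top.ne
  set pbar : ℝ := (2:ℝ) ^ (((n:ℝ)+2)/2) / V1 with hpbar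
  set m : ℝ := min 1 (R^2) / 8 with hmdef
  have hm0 : 0 < m := by
    rw [hmdef]
    have h := lt_min one_pos (pow_pos hR 2)
    linarith
  have hm8 : m ≤ 1/8 := by
    rw [hmdef]; have := min_le_left 1 (R^2); linarith
  have hmR : m ≤ R^2/8 := by
    rw [hmdef]; have := min_le_right 1 (R^2); linarith
  have hm1 : m ≤ 1 := by linarith
  set Mr : ℝ := max 1 R with hMrdef
  have hMr1 : (1:ℝ) ≤ Mr := le_max_left _ _
  have hMrR : R ≤ Mr := le_max_right 1 R
  set C2 : ℝ := pbar * Mr ^ (2:ℝ) * m ^ (-(((n:ℝ)+2)/2)) with hC2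
  have hpbar0 : 0 < pbar := by
    rw [hpbar]; exact div_pos (Real.rpow_pos_of_pos two_pos _) hV1pos
  have hC20 : 0 < C2 := by
    rw [hC2]
    exact mul_pos (mul_pos hpbar0 (Real.rpow_pos_of_pos (by linarith) _))
      (Real.rpow_pos_of_pos hm0 _)
  set V : ℝ≥0∞ := volume (ball (0:Eu n) R) with hV
  have hVfin : V ≠ ∞ := measure_ball_lt_top.ne
  set Iy : ℝ≥0∞ := ∫⁻ y in Ioo (0:ℝ) R, ENNReal.ofReal (y ^ (1-2*s)) with hIydef
  have hIyfin : Iy ≠ ∞ := by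
    have hint : IntegrableOn (fun y:ℝ => y ^ (1-2*s)) (Ioo 0 R) := by
      have h := intervalIntegral.intervalIntegrable_rpow' (a := 0) (b := R) (r := 1-2*s) (by linarith)
      rw [intervalIntegrable_iff_integrableOn_Ioc_of_le hR.le] at h
      exact h.mono_set Ioo_subset_Ioc_self
    have hnn : 0 ≤ᵐ[volume.restrict (Ioo (0:ℝ) R)] fun y : ℝ => y ^ (1-2*s) := by
      filter_upwards [ae_restrict_mem measurableSet_Ioo] with y hy
      exact Real.rpow_nonneg hy.1.le _
    rw [hIydef, ← ofReal_integral_eq_lintegral_ofReal hint hnn]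
    exact ENNReal.ofReal_ne_top
  have h2p : (2:ℝ≥0∞) ^ p ≠ ∞ := ENNReal.rpow_ne_top_of_nonneg hp0' (by norm_num)
  set D : ℝ≥0∞ := Iy * 2^p * (1 + ENNReal.ofReal C2 ^ p * V) with hD
  have hDfin : D ≠ ∞ := by
    rw [hD]
    refine ENNReal.mul_ne_top (ENNReal.mul_ne_top hIyfin h2p) ?_
    exact ENNReal.add_ne_top.2 ⟨ENNReal.one_ne_top,
      ENNReal.mul_ne_top (ENNReal.rpow_ne_top_of_nonneg hp0' ENNReal.ofReal_ne_top) hVfin⟩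
  clear_value V1 pbar m Mr C2 V Iy D
  refine ⟨max 1 (D.toReal ^ (1/p)), lt_of_lt_of_le one_pos (le_max_left _ _), ?_⟩
  intro u pns v hu hLp hMem hPC hv
  subst hv
  obtain ⟨hpns0, hnorm⟩ := hPC
  -- basic facts about the kernel
  have hPnn : ∀ (xb : Eu n) {y : ℝ}, 0 < y → 0 ≤ Pgen n s pns xb y := by
    intro xb y hy
    exact mul_nonneg (mul_nonneg hpns0.le (Real.rpow_nonneg hy.le _))
      (Real.rpow_nonneg (by positivity) _)
  have hPpos : ∀ (xb : Eu n) {y : ℝ}, 0 < y → 0 < Pgen n s pns xb y := by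
    intro xb y hy
    have hb : (0:ℝ) < ‖xb‖^2 + y^2 := add_pos_of_nonneg_of_pos (sq_nonneg _) (pow_pos hy 2)
    exact mul_pos (mul_pos hpns0 (Real.rpow_pos_of_pos hy _)) (Real.rpow_pos_of_pos hb _)
  have hIntP : ∀ {y : ℝ}, 0 < y → Integrable (fun xb : Eu n => Pgen n s pns xb y) := by
    intro y hy
    by_contra h
    have h1 := hnorm y hy
    rw [integral_undef h] at h1
    norm_num at h1
  -- a bound on the normalizing constant
  have hpns_le : pns ≤ pbar := by
    have hc : ∀ xb ∈ ball (0:Eu n) 1, pns * (2:ℝ) ^ (-(((n:ℝ)+2)/2)) ≤ Pgen n s pns xb 1 := by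
      intro xb hxb
      rw [mem_ball_zero_iff] at hxb
      have hb2 : ‖xb‖^2 + (1:ℝ)^2 ≤ 2 := by nlinarith [norm_nonneg xb]
      have hb0 : (0:ℝ) < ‖xb‖^2 + (1:ℝ)^2 := by positivity
      have h1 : (2:ℝ) ^ (-(((n:ℝ)+2)/2)) ≤ (2:ℝ) ^ (-(((n:ℝ)+2*s)/2)) :=
        Real.rpow_le_rpow_of_exponent_le one_le_two (by linarith)
      have h2 : (2:ℝ) ^ (-(((n:ℝ)+2*s)/2)) ≤ (‖xb‖^2 + (1:ℝ)^2) ^ (-(((n:ℝ)+2*s)/2)) :=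
        Real.rpow_le_rpow_of_nonpos hb0 hb2
          (by have := Nat.cast_nonneg (α := ℝ) n; linarith)
      calc pns * 2 ^ (-(((n:ℝ)+2)/2))
          ≤ pns * ((‖xb‖^2 + (1:ℝ)^2) ^ (-(((n:ℝ)+2*s)/2))) :=
            mul_le_mul_of_nonneg_left (h1.trans h2) hpns0.le
        _ = Pgen n s pns xb 1 := by rw [Pgen, Real.one_rpow, mul_one]
    have hge := setIntegral_ge_of_const_le measurableSet_ball measure_ball_lt_top.ne hc
      (hIntP one_pos).integrableOn
    have hle := setIntegral_le_integral (s := ball (0:Eu n) 1) (hIntP one_pos)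
      (ae_of_all _ (fun xb => hPnn xb one_pos))
    rw [hnorm 1 one_pos] at hle
    have hmain : pns * (2:ℝ)^(-(((n:ℝ)+2)/2)) * V1 ≤ 1 := le_trans (le_trans (le_of_eq (by rw [hV1, smul_eq_mul, measureReal_def]; ring)) hge) hle
    have hw : (0:ℝ) < (2:ℝ)^(((n:ℝ)+2)/2) := Real.rpow_pos_of_pos two_pos _
    rw [Real.rpow_neg two_pos.le] at hmain
    rw [hpbar, le_div_iff₀ hV1pos]
    calc pns * V1 = pns * ((2:ℝ)^(((n:ℝ)+2)/2))⁻¹ * V1 * (2:ℝ)^(((n:ℝ)+2)/2) := by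
          field_simp
      _ ≤ 1 * (2:ℝ)^(((n:ℝ)+2)/2) := mul_le_mul_of_nonneg_right hmain hw.le
      _ = (2:ℝ)^(((n:ℝ)+2)/2) := one_mul _
  -- tail bound for the kernel
  have htail : ∀ (x' z' : Eu n) (y : ℝ), ‖x'‖ < R → 0 < y → y < R → 2*R ≤ ‖z'‖ →
      Pgen n s pns (x' - z') y ≤ C2 * (1 + ‖z'‖ ^ 2) ^ (-(((n:ℝ) + 2 * s) / 2)) := by
    intro x' z' y hx hy hyR hz
    have hs1' : ‖z'‖ / 2 ≤ ‖x' - z'‖ := by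
      have h1 : ‖z'‖ - ‖x'‖ ≤ ‖z' - x'‖ := norm_sub_norm_le _ _
      rw [norm_sub_rev] at h1
      linarith
    have hsq : (‖z'‖/2)^2 ≤ ‖x' - z'‖^2 := pow_le_pow_left₀ (by positivity) hs1' 2
    have hRz : R^2 ≤ (‖z'‖/2)^2 := pow_le_pow_left₀ hR.le (by linarith) 2
    have hmz : m * ‖z'‖^2 ≤ (1/8) * ‖z'‖^2 := mul_le_mul_of_nonneg_right hm8 (sq_nonneg _)
    have hA : m * (1 + ‖z'‖^2) ≤ ‖x' - z'‖^2 + y^2 := by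
      have hy2 : 0 ≤ y^2 := sq_nonneg y
      nlinarith [hsq, hRz, hmR, hmz]
    have hApos : (0:ℝ) < m * (1 + ‖z'‖^2) := mul_pos hm0 (by positivity)
    have hwnn : (0:ℝ) ≤ (1+‖z'‖^2) ^ (-(((n:ℝ)+2*s)/2)) := Real.rpow_nonneg (by positivity) _
    have hy2s : y ^ (2*s) ≤ Mr ^ (2:ℝ) := by
      have h1 : y ^ (2*s) ≤ Mr ^ (2*s) :=
        Real.rpow_le_rpow hy.le (le_trans hyR.le hMrR) (by linarith)
      exact h1.trans (Real.rpow_le_rpow_of_exponent_le hMr1 (by linarith))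
    have hb1 : (‖x' - z'‖^2 + y^2) ^ (-(((n:ℝ)+2*s)/2))
        ≤ (m * (1+‖z'‖^2)) ^ (-(((n:ℝ)+2*s)/2)) :=
      Real.rpow_le_rpow_of_nonpos hApos hA
        (by have := Nat.cast_nonneg (α := ℝ) n; linarith)
    have hb2 : (m * (1+‖z'‖^2)) ^ (-(((n:ℝ)+2*s)/2))
        = m ^ (-(((n:ℝ)+2*s)/2)) * (1+‖z'‖^2) ^ (-(((n:ℝ)+2*s)/2)) :=
      Real.mul_rpow hm0.le (by positivity)
    have hb3 : m ^ (-(((n:ℝ)+2*s)/2)) ≤ m ^ (-(((n:ℝ)+2)/2)) :=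
      Real.rpow_le_rpow_of_exponent_ge hm0 hm1 (by linarith)
    have hbfull : (‖x' - z'‖^2 + y^2) ^ (-(((n:ℝ)+2*s)/2))
        ≤ m ^ (-(((n:ℝ)+2)/2)) * (1+‖z'‖^2) ^ (-(((n:ℝ)+2*s)/2)) := by
      rw [hb2] at hb1
      exact hb1.trans (mul_le_mul_of_nonneg_right hb3 hwnn)
    have hMrnn : (0:ℝ) ≤ Mr ^ (2:ℝ) := Real.rpow_nonneg (by linarith) _
    calc Pgen n s pns (x' - z') y
        = pns * y ^ (2*s) * (‖x' - z'‖^2 + y^2) ^ (-(((n:ℝ)+2*s)/2)) := rfl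
      _ ≤ pbar * Mr ^ (2:ℝ) * (m ^ (-(((n:ℝ)+2)/2)) * (1+‖z'‖^2) ^ (-(((n:ℝ)+2*s)/2))) := by
          refine mul_le_mul ?_ hbfull (Real.rpow_nonneg (by positivity) _)
            (mul_nonneg hpbar0.le hMrnn)
          exact mul_le_mul hpns_le hy2s (Real.rpow_nonneg hy.le _) hpbar0.le
      _ = C2 * (1+‖z'‖^2) ^ (-(((n:ℝ)+2*s)/2)) := by rw [hC2]; ring
  -- measurability facts
  have hP2 : Measurable fun w : Eu n × ℝ => Pgen n s pns w.1 w.2 :=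
    (measurable_const.mul (measurable_snd.pow measurable_const)).mul
      (((measurable_fst.norm.pow_const 2).add (measurable_snd.pow_const 2)).pow
        measurable_const)
  have hlastm : Measurable fun x : Eu (n+1) => lastE x :=
    (measurable_pi_apply _).comp (WithLp.measurable_ofLp _ _)
  have hheadm : Measurable fun x : Eu (n+1) => headE x :=
    (WithLp.measurable_toLp _ _).comp
      (measurable_pi_lambda _ fun _ => (measurable_pi_apply _).comp (WithLp.measurable_ofLp _ _))
  -- translation invariance facts
  have hneg : ∀ g : Eu n → ℝ≥0∞, ∫⁻ z, g (-z) = ∫⁻ z, g z := by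
    intro g
    have h1 := lintegral_map_equiv (μ := (volume : Measure (Eu n))) g (MeasurableEquiv.neg (Eu n))
    have h2 : Measure.map (⇑(MeasurableEquiv.neg (Eu n))) (volume : Measure (Eu n)) = volume := by
      rw [show (⇑(MeasurableEquiv.neg (Eu n)) : Eu n → Eu n) = Neg.neg from rfl]
      exact Measure.map_neg_eq_self _
    rw [h2] at h1
    exact h1.symm
  have hmass : ∀ {y : ℝ}, 0 < y → ∫⁻ xb : Eu n, ENNReal.ofReal (Pgen n s pns xb y) = 1 := by
    intro y hy
    rw [← ofReal_integral_eq_lintegral_ofReal (hIntP hy) (ae_of_all _ fun xb => hPnn xb hy),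
      hnorm y hy, ENNReal.ofReal_one]
  have hmass_right : ∀ (z' : Eu n) {y : ℝ}, 0 < y →
      ∫⁻ x' : Eu n, ENNReal.ofReal (Pgen n s pns (x' - z') y) = 1 := by
    intro z' y hy
    rw [lintegral_sub_right_eq_self (fun xb : Eu n => ENNReal.ofReal (Pgen n s pns xb y)) z']
    exact hmass hy
  have hmass_left : ∀ (x' : Eu n) {y : ℝ}, 0 < y →
      ∫⁻ z' : Eu n, ENNReal.ofReal (Pgen n s pns (x' - z') y) = 1 := by
    intro x' y hy
    have h1 : (fun z' : Eu n => ENNReal.ofReal (Pgen n s pns (x' - z') y))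
        = fun z' : Eu n =>
          (fun w : Eu n => ENNReal.ofReal (Pgen n s pns (x' + w) y)) (-z') := by
      funext z'; rw [sub_eq_add_neg]
    rw [h1, hneg fun w : Eu n => ENNReal.ofReal (Pgen n s pns (x' + w) y),
      lintegral_add_left_eq_self (fun xb : Eu n => ENNReal.ofReal (Pgen n s pns xb y)) x']
    exact hmass hy
  -- the weight is nonnegative
  have hw_nn : ∀ z' : Eu n, (0:ℝ) ≤ (1+‖z'‖^2) ^ (-(((n:ℝ)+2*s)/2)) :=
    fun z' => Real.rpow_nonneg (by positivity) _
  have hB0 : 0 ≤ L1sNorm n s u :=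
    integral_nonneg fun z' => mul_nonneg (abs_nonneg _) (hw_nn z')
  -- the L¹ₛ norm as a lower integral
  have hMem' : Integrable (fun x' : Eu n => u x' * (1+‖x'‖^2) ^ (-(((n:ℝ)+2*s)/2))) := hMem
  have hUint : Integrable (fun z' : Eu n => |u z'| * (1+‖z'‖^2) ^ (-(((n:ℝ)+2*s)/2))) := by
    refine hMem'.abs.congr (ae_of_all _ fun z' => ?_)
    simp only [abs_mul]
    rw [abs_of_nonneg (hw_nn z')]
  have hUB : (∫⁻ z' : Eu n, (‖u z'‖₊ : ℝ≥0∞) * ENNReal.ofReal ((1+‖z'‖^2) ^ (-(((n:ℝ)+2*s)/2))))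
      = ENNReal.ofReal (L1sNorm n s u) := by
    rw [L1sNorm, ofReal_integral_eq_lintegral_ofReal hUint
      (ae_of_all _ fun z' => mul_nonneg (abs_nonneg _) (hw_nn z'))]
    refine lintegral_congr fun z' => ?_
    rw [ENNReal.ofReal_mul (abs_nonneg _), ← enorm_eq_nnnorm, Real.enorm_eq_ofReal_abs]
  -- the local Lᵖ integral as a lower integral
  have hIA0 : 0 ≤ ∫ x' in ball (0:Eu n) (2*R), |u x'| ^ p :=
    integral_nonneg fun x' => Real.rpow_nonneg (abs_nonneg _) _
  have hApA : (∫⁻ z' in ball (0:Eu n) (2*R), (‖u z'‖₊ : ℝ≥0∞) ^ p)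
      = ENNReal.ofReal (∫ x' in ball (0:Eu n) (2*R), |u x'| ^ p) := by
    rw [ofReal_integral_eq_lintegral_ofReal hLp
      (ae_of_all _ fun x' => Real.rpow_nonneg (abs_nonneg _) _)]
    refine lintegral_congr fun z' => ?_
    rw [← enorm_eq_nnnorm, Real.enorm_eq_ofReal_abs, ENNReal.ofReal_rpow_of_nonneg (abs_nonneg _) hp0']
  -- local part of the extension, and the constant tail bound
  set G : Eu n → ℝ → ℝ≥0∞ := fun x' y =>
    ∫⁻ z' in ball (0:Eu n) (2*R),
      (‖u z'‖₊ : ℝ≥0∞) * ENNReal.ofReal (Pgen n s pns (x' - z') y) with hG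
  set Kc : ℝ≥0∞ := ENNReal.ofReal C2 * ENNReal.ofReal (L1sNorm n s u) with hKc
  have hKcfin : Kc ≠ ∞ := by
    rw [hKc]; exact ENNReal.mul_ne_top ENNReal.ofReal_ne_top ENNReal.ofReal_ne_top
  have hF : Measurable fun q : (ℝ × Eu n) × Eu n =>
      (‖u q.2‖₊ : ℝ≥0∞) * ENNReal.ofReal (Pgen n s pns (q.1.2 - q.2) q.1.1) :=
    ((hu.comp measurable_snd).nnnorm.coe_nnreal_ennreal).mul
      (ENNReal.measurable_ofReal.comp (hP2.comp
        ((measurable_fst.snd.sub measurable_snd).prodMk measurable_fst.fst)))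
  have hGm2 : Measurable fun w : ℝ × Eu n => G w.2 w.1 := by
    rw [hG]
    exact hF.lintegral_prod_right'
  clear_value Kc
  -- Jensen/Hölder step
  have hGp : ∀ {y : ℝ}, 0 < y → ∀ x' : Eu n, (G x' y) ^ p
      ≤ ∫⁻ z' in ball (0:Eu n) (2*R),
        (‖u z'‖₊ : ℝ≥0∞) ^ p * ENNReal.ofReal (Pgen n s pns (x' - z') y) := by
    intro y hy x'
    rcases eq_or_lt_of_le hp with rfl | hp1
    · refine le_of_eq ?_
      simp only [ENNReal.rpow_one, hG]
    · have hq : p.HolderConjugate (Real.conjExponent p) := Real.HolderConjugate.conjExponent hp1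
      set q : ℝ := Real.conjExponent p with hqdef
      have hqne : q ≠ 0 := hq.symm.ne_zero
      have hPe_ne : ∀ z' : Eu n, ENNReal.ofReal (Pgen n s pns (x' - z') y) ≠ 0 :=
        fun z' => (ENNReal.ofReal_pos.2 (hPpos _ hy)).ne'
      have hfm : Measurable fun z' : Eu n =>
          (‖u z'‖₊ : ℝ≥0∞) * ENNReal.ofReal (Pgen n s pns (x' - z') y) ^ (1/p) :=
        (hu.nnnorm.coe_nnreal_ennreal).mul
          ((ENNReal.measurable_ofReal.comp (hP2.comp
            ((measurable_const.sub measurable_id).prodMk measurable_const))).pow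
              measurable_const)
      have hgm : Measurable fun z' : Eu n =>
          ENNReal.ofReal (Pgen n s pns (x' - z') y) ^ (1/q) :=
        (ENNReal.measurable_ofReal.comp (hP2.comp
          ((measurable_const.sub measurable_id).prodMk measurable_const))).pow
            measurable_const
      have hkey := ENNReal.lintegral_mul_le_Lp_mul_Lq
        (volume.restrict (ball (0:Eu n) (2*R))) hq hfm.aemeasurable hgm.aemeasurable
      have heq1 : G x' y = ∫⁻ z' in ball (0:Eu n) (2*R),
          ((fun z' : Eu n => (‖u z'‖₊ : ℝ≥0∞) * ENNReal.ofReal (Pgen n s pns (x' - z') y) ^ (1/p))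
            * fun z' : Eu n => ENNReal.ofReal (Pgen n s pns (x' - z') y) ^ (1/q)) z' := by
        rw [hG]
        refine lintegral_congr fun z' => ?_
        simp only [Pi.mul_apply]
        rw [mul_assoc, ← ENNReal.rpow_add _ _ (hPe_ne z') ENNReal.ofReal_ne_top,
          show 1/p + 1/q = 1 by rw [one_div, one_div]; exact hq.inv_add_inv_eq_one,
          ENNReal.rpow_one]
      have hfp : (∫⁻ z' in ball (0:Eu n) (2*R),
          ((‖u z'‖₊ : ℝ≥0∞) * ENNReal.ofReal (Pgen n s pns (x' - z') y) ^ (1/p)) ^ p)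
          = ∫⁻ z' in ball (0:Eu n) (2*R),
            (‖u z'‖₊ : ℝ≥0∞) ^ p * ENNReal.ofReal (Pgen n s pns (x' - z') y) := by
        refine lintegral_congr fun z' => ?_
        rw [ENNReal.mul_rpow_of_nonneg _ _ hp0', ← ENNReal.rpow_mul, one_div,
          inv_mul_cancel₀ hpne, ENNReal.rpow_one]
      have hgq : (∫⁻ z' in ball (0:Eu n) (2*R),
          (ENNReal.ofReal (Pgen n s pns (x' - z') y) ^ (1/q)) ^ q) ≤ 1 := by
        have heq : ∀ z' : Eu n,
            (ENNReal.ofReal (Pgen n s pns (x' - z') y) ^ (1/q)) ^ q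
            = ENNReal.ofReal (Pgen n s pns (x' - z') y) := fun z' => by
          rw [← ENNReal.rpow_mul, one_div, inv_mul_cancel₀ hqne, ENNReal.rpow_one]
        calc (∫⁻ z' in ball (0:Eu n) (2*R),
              (ENNReal.ofReal (Pgen n s pns (x' - z') y) ^ (1/q)) ^ q)
            = ∫⁻ z' in ball (0:Eu n) (2*R), ENNReal.ofReal (Pgen n s pns (x' - z') y) :=
              lintegral_congr fun z' => heq z'
          _ ≤ ∫⁻ z' : Eu n, ENNReal.ofReal (Pgen n s pns (x' - z') y) :=
              setLIntegral_le_lintegral _ _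
          _ = 1 := hmass_left x' hy
      have hGle : G x' y ≤ (∫⁻ z' in ball (0:Eu n) (2*R),
          (‖u z'‖₊ : ℝ≥0∞) ^ p * ENNReal.ofReal (Pgen n s pns (x' - z') y)) ^ (1/p) := by
        rw [heq1]
        refine hkey.trans ?_
        rw [hfp]
        calc _ ≤ (∫⁻ z' in ball (0:Eu n) (2*R),
              (‖u z'‖₊ : ℝ≥0∞) ^ p * ENNReal.ofReal (Pgen n s pns (x' - z') y)) ^ (1/p)
              * (1:ℝ≥0∞) ^ (1/q) := by
              refine mul_le_mul_right (ENNReal.rpow_le_rpow hgq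
                (one_div_nonneg.2 hq.symm.pos.le)) _
          _ = _ := by rw [ENNReal.one_rpow, mul_one]
      calc (G x' y) ^ p ≤ ((∫⁻ z' in ball (0:Eu n) (2*R),
            (‖u z'‖₊ : ℝ≥0∞) ^ p * ENNReal.ofReal (Pgen n s pns (x' - z') y)) ^ (1/p)) ^ p :=
          ENNReal.rpow_le_rpow hGle hp0'
        _ = _ := by rw [← ENNReal.rpow_mul, one_div, inv_mul_cancel₀ hpne, ENNReal.rpow_one]
  -- Fubini for the local part
  have hswap : ∀ {y : ℝ}, 0 < y →
      (∫⁻ x' : Eu n, ∫⁻ z' in ball (0:Eu n) (2*R),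
        (‖u z'‖₊ : ℝ≥0∞) ^ p * ENNReal.ofReal (Pgen n s pns (x' - z') y))
      = ∫⁻ z' in ball (0:Eu n) (2*R), (‖u z'‖₊ : ℝ≥0∞) ^ p := by
    intro y hy
    have hm2 : AEMeasurable (Function.uncurry fun (x' z' : Eu n) =>
        (‖u z'‖₊ : ℝ≥0∞) ^ p * ENNReal.ofReal (Pgen n s pns (x' - z') y))
        ((volume : Measure (Eu n)).prod (volume.restrict (ball (0:Eu n) (2*R)))) :=
      (((hu.comp measurable_snd).nnnorm.coe_nnreal_ennreal.pow measurable_const).mul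
        (ENNReal.measurable_ofReal.comp (hP2.comp
          ((measurable_fst.sub measurable_snd).prodMk measurable_const)))).aemeasurable
    rw [lintegral_lintegral_swap hm2]
    refine lintegral_congr fun z' => ?_
    rw [lintegral_const_mul' _ _ (ENNReal.rpow_ne_top_of_nonneg hp0' ENNReal.coe_ne_top),
      hmass_right z' hy, mul_one]
  -- pointwise bound on the extension
  have hvb : ∀ x : Eu (n+1), ‖headE x‖ < R → 0 < lastE x → lastE x < R →
      (‖sExt n s pns u x‖₊ : ℝ≥0∞) ≤ G (headE x) (lastE x) + Kc := by
    intro x hx1 hx2 hx3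
    have step1 : (‖sExt n s pns u x‖₊ : ℝ≥0∞)
        ≤ ∫⁻ z' : Eu n, (‖u z'‖₊ : ℝ≥0∞)
            * ENNReal.ofReal (Pgen n s pns (headE x - z') (lastE x)) := by
      refine le_trans (enorm_integral_le_lintegral_enorm _) (le_of_eq ?_)
      refine lintegral_congr fun z' => ?_
      rw [enorm_mul, Real.enorm_eq_ofReal (hPnn _ hx2), enorm_eq_nnnorm]
    refine step1.trans ?_
    rw [← lintegral_add_compl (fun z' : Eu n => (‖u z'‖₊ : ℝ≥0∞)
      * ENNReal.ofReal (Pgen n s pns (headE x - z') (lastE x)))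
      (measurableSet_ball (x := (0:Eu n)) (ε := 2*R))]
    refine add_le_add (le_of_eq (by rw [hG])) ?_
    calc (∫⁻ z' in (ball (0:Eu n) (2*R))ᶜ,
          (‖u z'‖₊ : ℝ≥0∞) * ENNReal.ofReal (Pgen n s pns (headE x - z') (lastE x)))
        ≤ ∫⁻ z' in (ball (0:Eu n) (2*R))ᶜ, ENNReal.ofReal C2
            * ((‖u z'‖₊ : ℝ≥0∞) * ENNReal.ofReal ((1+‖z'‖^2) ^ (-(((n:ℝ)+2*s)/2)))) := by
          refine lintegral_mono_ae ?_
          rw [ae_restrict_iff' measurableSet_ball.compl]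
          refine ae_of_all _ fun z' hz' => ?_
          have hz2 : 2*R ≤ ‖z'‖ := by
            rw [mem_compl_iff, mem_ball_zero_iff, not_lt] at hz'; exact hz'
          rw [mul_left_comm]
          refine mul_le_mul_right ?_ _
          rw [← ENNReal.ofReal_mul hC20.le]
          exact ENNReal.ofReal_le_ofReal (htail _ _ _ hx1 hx2 hx3 hz2)
      _ = ENNReal.ofReal C2 * ∫⁻ z' in (ball (0:Eu n) (2*R))ᶜ,
            (‖u z'‖₊ : ℝ≥0∞) * ENNReal.ofReal ((1+‖z'‖^2) ^ (-(((n:ℝ)+2*s)/2))) :=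
          lintegral_const_mul' _ _ ENNReal.ofReal_ne_top
      _ ≤ ENNReal.ofReal C2 * ∫⁻ z' : Eu n,
            (‖u z'‖₊ : ℝ≥0∞) * ENNReal.ofReal ((1+‖z'‖^2) ^ (-(((n:ℝ)+2*s)/2))) :=
          mul_le_mul_right (setLIntegral_le_lintegral _ _) _
      _ = Kc := by rw [hUB, hKc]
  -- strong measurability of the extension
  have hvm : Measurable (sExt n s pns u) := by
    have h1 : Measurable fun q : Eu (n+1) × Eu n =>
        u q.2 * Pgen n s pns (headE q.1 - q.2) (lastE q.1) :=
      (hu.comp measurable_snd).mul (hP2.comp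
        (((hheadm.comp measurable_fst).sub measurable_snd).prodMk
          (hlastm.comp measurable_fst)))
    exact h1.stronglyMeasurable.integral_prod_right'.measurable
  have hHBmeas : MeasurableSet (HB n R) :=
    measurableSet_ball.inter (measurableSet_lt measurable_const hlastm)
  have hcomp : ∀ x ∈ HB n R, ‖headE x‖ < R ∧ 0 < lastE x ∧ lastE x < R := by
    intro x hx
    obtain ⟨hx1, hx2⟩ := hx
    rw [mem_ball_zero_iff] at hx1
    exact ⟨lt_of_le_of_lt (Stmt15aux.norm_headE_le x) hx1, hx2,
      lt_of_le_of_lt (le_trans (le_abs_self _) (Stmt15aux.abs_lastE_le x)) hx1⟩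
  set T : ℝ≥0∞ := ∫⁻ x in HB n R,
    ENNReal.ofReal (lastE x ^ (1-2*s) * |sExt n s pns u x| ^ p) with hT
  have h_eq : ∫ x in HB n R, lastE x ^ (1-2*s) * |sExt n s pns u x| ^ p = T.toReal := by
    rw [hT, integral_eq_lintegral_of_nonneg_ae ?_ ?_]
    · filter_upwards [ae_restrict_mem hHBmeas] with x hx
      exact mul_nonneg (Real.rpow_nonneg (hcomp x hx).2.1.le _)
        (Real.rpow_nonneg (abs_nonneg _) _)
    · exact ((hlastm.pow measurable_const).mul
        (hvm.abs.pow measurable_const)).aestronglyMeasurable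
  -- chain of estimates
  have hchain1 : T ≤ ∫⁻ x in Stmt15aux.eSplit n ⁻¹' (Ioo (0:ℝ) R ×ˢ ball (0:Eu n) R),
      ENNReal.ofReal (lastE x ^ (1-2*s)) * (G (headE x) (lastE x) + Kc) ^ p := by
    rw [hT]
    refine le_trans (lintegral_mono_ae ?_) (lintegral_mono_set ?_)
    · rw [ae_restrict_iff' hHBmeas]
      refine ae_of_all _ fun x hx => ?_
      obtain ⟨h1, h2, h3⟩ := hcomp x hx
      rw [ENNReal.ofReal_mul (Real.rpow_nonneg h2.le _)]
      refine mul_le_mul_right ?_ _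
      rw [← ENNReal.ofReal_rpow_of_nonneg (abs_nonneg _) hp0', ← Real.enorm_eq_ofReal_abs]
      exact ENNReal.rpow_le_rpow (hvb x h1 h2 h3) hp0'
    · intro x hx
      obtain ⟨h1, h2, h3⟩ := hcomp x hx
      rw [mem_preimage, Stmt15aux.eSplit_apply]
      exact ⟨⟨h2, h3⟩, mem_ball_zero_iff.2 h1⟩
  have hchain2 : (∫⁻ x in Stmt15aux.eSplit n ⁻¹' (Ioo (0:ℝ) R ×ˢ ball (0:Eu n) R),
        ENNReal.ofReal (lastE x ^ (1-2*s)) * (G (headE x) (lastE x) + Kc) ^ p)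
      = ∫⁻ w in Ioo (0:ℝ) R ×ˢ ball (0:Eu n) R,
        ENNReal.ofReal (w.1 ^ (1-2*s)) * (G w.2 w.1 + Kc) ^ p := by
    rw [← MeasurePreserving.setLIntegral_comp_preimage_emb (Stmt15aux.eSplit_mp n)
      (Stmt15aux.eSplit n).measurableEmbedding
      (fun w : ℝ × Eu n => ENNReal.ofReal (w.1 ^ (1-2*s)) * (G w.2 w.1 + Kc) ^ p) _]
    refine lintegral_congr fun x => ?_
    rw [Stmt15aux.eSplit_apply]
  have hHm : Measurable fun w : ℝ × Eu n =>
      ENNReal.ofReal (w.1 ^ (1-2*s)) * (G w.2 w.1 + Kc) ^ p :=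
    (ENNReal.measurable_ofReal.comp (measurable_fst.pow measurable_const)).mul
      ((hGm2.add measurable_const).pow measurable_const)
  have hchain3 : (∫⁻ w in Ioo (0:ℝ) R ×ˢ ball (0:Eu n) R,
        ENNReal.ofReal (w.1 ^ (1-2*s)) * (G w.2 w.1 + Kc) ^ p)
      = ∫⁻ y in Ioo (0:ℝ) R, ∫⁻ x' in ball (0:Eu n) R,
        ENNReal.ofReal (y ^ (1-2*s)) * (G x' y + Kc) ^ p := by
    rw [Measure.volume_eq_prod, ← Measure.prod_restrict, lintegral_prod _ hHm.aemeasurable]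
  have hApfin : (∫⁻ z' in ball (0:Eu n) (2*R), (‖u z'‖₊ : ℝ≥0∞) ^ p) ≠ ∞ := by
    rw [hApA]; exact ENNReal.ofReal_ne_top
  have hZfin : (2:ℝ≥0∞)^p * ((∫⁻ z' in ball (0:Eu n) (2*R), (‖u z'‖₊ : ℝ≥0∞) ^ p)
      + Kc^p * V) ≠ ∞ :=
    ENNReal.mul_ne_top h2p (ENNReal.add_ne_top.2 ⟨hApfin,
      ENNReal.mul_ne_top (ENNReal.rpow_ne_top_of_nonneg hp0' hKcfin) hVfin⟩)
  have hchain4 : (∫⁻ y in Ioo (0:ℝ) R, ∫⁻ x' in ball (0:Eu n) R,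
        ENNReal.ofReal (y ^ (1-2*s)) * (G x' y + Kc) ^ p)
      ≤ Iy * ((2:ℝ≥0∞)^p * ((∫⁻ z' in ball (0:Eu n) (2*R), (‖u z'‖₊ : ℝ≥0∞) ^ p)
        + Kc^p * V)) := by
    have hstep : ∀ᵐ y ∂(volume.restrict (Ioo (0:ℝ) R)),
        (∫⁻ x' in ball (0:Eu n) R, ENNReal.ofReal (y ^ (1-2*s)) * (G x' y + Kc) ^ p)
        ≤ ENNReal.ofReal (y ^ (1-2*s)) * ((2:ℝ≥0∞)^p
          * ((∫⁻ z' in ball (0:Eu n) (2*R), (‖u z'‖₊ : ℝ≥0∞) ^ p) + Kc^p * V)) := by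
      rw [ae_restrict_iff' measurableSet_Ioo]
      refine ae_of_all _ fun y hy => ?_
      rw [lintegral_const_mul' _ _ ENNReal.ofReal_ne_top]
      refine mul_le_mul_right ?_ _
      calc (∫⁻ x' in ball (0:Eu n) R, (G x' y + Kc) ^ p)
          ≤ ∫⁻ x' in ball (0:Eu n) R, 2^p * ((G x' y)^p + Kc^p) :=
            lintegral_mono fun x' => Stmt15aux.rpow_add_le _ _ hp0'
        _ = 2^p * ((∫⁻ x' in ball (0:Eu n) R, (G x' y)^p) + Kc^p * V) := by
            rw [lintegral_const_mul' _ _ h2p, lintegral_add_right _ measurable_const,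
              setLIntegral_const, hV]
        _ ≤ _ := by
            refine mul_le_mul_right (add_le_add_left ?_ _) _
            calc (∫⁻ x' in ball (0:Eu n) R, (G x' y)^p)
                ≤ ∫⁻ x' : Eu n, (G x' y)^p := setLIntegral_le_lintegral _ _
              _ ≤ ∫⁻ x' : Eu n, ∫⁻ z' in ball (0:Eu n) (2*R),
                  (‖u z'‖₊ : ℝ≥0∞) ^ p * ENNReal.ofReal (Pgen n s pns (x' - z') y) :=
                  lintegral_mono fun x' => hGp hy.1 x'
              _ = _ := hswap hy.1
    calc (∫⁻ y in Ioo (0:ℝ) R, ∫⁻ x' in ball (0:Eu n) R,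
          ENNReal.ofReal (y ^ (1-2*s)) * (G x' y + Kc) ^ p)
        ≤ ∫⁻ y in Ioo (0:ℝ) R, ENNReal.ofReal (y ^ (1-2*s)) * ((2:ℝ≥0∞)^p
          * ((∫⁻ z' in ball (0:Eu n) (2*R), (‖u z'‖₊ : ℝ≥0∞) ^ p) + Kc^p * V)) :=
          lintegral_mono_ae hstep
      _ = Iy * ((2:ℝ≥0∞)^p * ((∫⁻ z' in ball (0:Eu n) (2*R), (‖u z'‖₊ : ℝ≥0∞) ^ p)
          + Kc^p * V)) := by
          rw [lintegral_mul_const' _ _ hZfin, hIydef]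
  -- assemble: numeric endgame
  set S : ℝ := (∫ x' in ball (0:Eu n) (2*R), |u x'| ^ p) ^ (1/p) + L1sNorm n s u with hS
  have hS0 : 0 ≤ S := add_nonneg (Real.rpow_nonneg hIA0 _) hB0
  clear_value S
  have hfinal1 : T ≤ D * ENNReal.ofReal (S ^ p) := by
    refine ((hchain1.trans (le_of_eq hchain2)).trans (le_of_eq hchain3)).trans
      (hchain4.trans ?_)
    rw [hApA]
    have h1 : ENNReal.ofReal (∫ x' in ball (0:Eu n) (2*R), |u x'| ^ p)
        ≤ ENNReal.ofReal (S ^ p) := by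
      apply ENNReal.ofReal_le_ofReal
      calc (∫ x' in ball (0:Eu n) (2*R), |u x'| ^ p)
          = ((∫ x' in ball (0:Eu n) (2*R), |u x'| ^ p) ^ (1/p)) ^ p := by
            rw [← Real.rpow_mul hIA0, one_div, inv_mul_cancel₀ hpne, Real.rpow_one]
        _ ≤ S ^ p := by
            rw [hS]
            exact Real.rpow_le_rpow (Real.rpow_nonneg hIA0 _)
              (le_add_of_nonneg_right hB0) hp0'
    have h2 : Kc ^ p ≤ ENNReal.ofReal C2 ^ p * ENNReal.ofReal (S ^ p) := by
      rw [hKc, ENNReal.mul_rpow_of_nonneg _ _ hp0']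
      refine mul_le_mul_right ?_ _
      rw [ENNReal.ofReal_rpow_of_nonneg hB0 hp0']
      refine ENNReal.ofReal_le_ofReal ?_
      rw [hS]
      exact Real.rpow_le_rpow hB0 (le_add_of_nonneg_left (Real.rpow_nonneg hIA0 _)) hp0'
    calc Iy * ((2:ℝ≥0∞)^p * (ENNReal.ofReal (∫ x' in ball (0:Eu n) (2*R), |u x'| ^ p)
          + Kc^p * V))
        ≤ Iy * ((2:ℝ≥0∞)^p * (ENNReal.ofReal (S ^ p)
          + (ENNReal.ofReal C2 ^ p * ENNReal.ofReal (S ^ p)) * V)) := by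
          exact mul_le_mul_right (mul_le_mul_right
            (add_le_add h1 (mul_le_mul_left h2 V)) _) _
      _ = D * ENNReal.ofReal (S ^ p) := by rw [hD]; ring
  rw [h_eq]
  have hDS : D * ENNReal.ofReal (S^p) ≠ ∞ := ENNReal.mul_ne_top hDfin ENNReal.ofReal_ne_top
  have h5 : T.toReal ≤ D.toReal * S ^ p := by
    have h6 := ENNReal.toReal_mono hDS hfinal1
    rwa [ENNReal.toReal_mul, ENNReal.toReal_ofReal (Real.rpow_nonneg hS0 _)] at h6
  calc T.toReal ^ (1/p) ≤ (D.toReal * S ^ p) ^ (1/p) :=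
        Real.rpow_le_rpow ENNReal.toReal_nonneg h5 (one_div_nonneg.2 hp0')
    _ = D.toReal ^ (1/p) * (S ^ p) ^ (1/p) :=
        Real.mul_rpow ENNReal.toReal_nonneg (Real.rpow_nonneg hS0 _)
    _ = D.toReal ^ (1/p) * S := by
        rw [← Real.rpow_mul hS0, mul_one_div, div_self hpne, Real.rpow_one]
    _ ≤ max 1 (D.toReal ^ (1/p)) * S := mul_le_mul_of_nonneg_right (le_max_right _ _) hS0
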